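/- For every n ≥ 2, every Z_n-sequence of length n + 2 in which no element of Z_n appears more than twice contains a subsequence of exactly n terms summing to zero. That is, s^(2)(Z_n) ≤ n + 2. -/
import Mathlib

theorem s_two_upper_bound (n : ℕ) (hn : 2 ≤ n) (f : Fin (n + 2) → ZMod n)
    (hmult : ∀ z : ZMod n, (Finset.univ.filter fun i => f i = z).card ≤ 2) :
    ∃ I : Finset (Fin (n + 2)), I.card = n ∧ ∑ i ∈ I, f i = 0 := by
  haveI : NeZero n := ⟨by omega⟩
  set S := ∑ i, f i with hS
  have hpair : ∃ i j : Fin (n + 2), i ≠ j ∧ f i + f j = S := by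
    by_contra hcon
    push_neg at hcon
    set A : Finset (ZMod n) := Finset.univ.image f with hA
    set B : Finset (ZMod n) := A.filter (fun v => v + v = S) with hB
    have hBsub : B ⊆ A := Finset.filter_subset _ _
    have hcardsum : (Finset.univ : Finset (Fin (n + 2))).card
        = ∑ v ∈ A, (Finset.univ.filter fun i => f i = v).card := by
      apply Finset.card_eq_sum_card_fiberwise
      intro x _
      exact Finset.mem_image_of_mem f (Finset.mem_univ x)
    have hBone : ∀ v ∈ B, (Finset.univ.filter fun i => f i = v).card ≤ 1 := by
      intro v hv
      by_contra hgt
      push_neg at hgt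
      obtain ⟨i, hi, j, hj, hij⟩ := Finset.one_lt_card.mp hgt
      simp only [Finset.mem_filter] at hi hj
      have hvv := (Finset.mem_filter.mp hv).2
      exact hcon i j hij (by rw [hi.2, hj.2]; exact hvv)
    have hdisj : Disjoint A ((A \ B).image (fun v => S - v)) := by
      rw [Finset.disjoint_right]
      intro w hw hwA
      obtain ⟨v, hv, hvw⟩ := Finset.mem_image.mp hw
      rw [Finset.mem_sdiff] at hv
      obtain ⟨j, _, hj⟩ := Finset.mem_image.mp hv.1
      obtain ⟨i, _, hi⟩ := Finset.mem_image.mp hwA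
      have hji : j ≠ i := by
        rintro rfl
        apply hv.2
        rw [hB, Finset.mem_filter]
        refine ⟨hv.1, ?_⟩
        have hvw' : v = S - v := (hj.symm.trans hi).trans hvw.symm
        exact eq_sub_iff_add_eq.mp hvw'
      apply hcon j i hji
      rw [hj, hi, ← hvw]
      ring
    have hcardA : A.card + (A \ B).card ≤ n := by
      have himg : ((A \ B).image (fun v => S - v)).card = (A \ B).card :=
        Finset.card_image_of_injective _ sub_right_injective
      have := Finset.card_union_of_disjoint hdisj
      have hle : (A ∪ (A \ B).image (fun v => S - v)).card ≤ Fintype.card (ZMod n) :=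
        Finset.card_le_univ _
      rw [this, himg] at hle
      rwa [ZMod.card] at hle
    have hsumle : ∑ v ∈ A, (Finset.univ.filter fun i => f i = v).card
        ≤ 2 * (A \ B).card + B.card := by
      rw [← Finset.sum_sdiff hBsub]
      have h1 : ∑ v ∈ A \ B, (Finset.univ.filter fun i => f i = v).card
          ≤ ∑ _v ∈ A \ B, 2 := Finset.sum_le_sum fun v _ => hmult v
      have h2 : ∑ v ∈ B, (Finset.univ.filter fun i => f i = v).card
          ≤ ∑ _v ∈ B, 1 := Finset.sum_le_sum hBone
      have := Nat.add_le_add h1 h2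
      simpa [Finset.sum_const, mul_comm] using this
    have hn2 : n + 2 = (Finset.univ : Finset (Fin (n + 2))).card := by
      simp
    have hBcard : B.card ≤ (A \ B).card + B.card := Nat.le_add_left _ _
    have : n + 2 ≤ 2 * (A \ B).card + B.card := by
      rw [hn2, hcardsum]; exact hsumle
    have hAcard : (A \ B).card + B.card = A.card := Finset.card_sdiff_add_card_eq_card hBsub
    omega
  obtain ⟨i, j, hij, hsum⟩ := hpair
  refine ⟨Finset.univ \ {i, j}, ?_, ?_⟩
  · rw [Finset.card_sdiff_of_subset (Finset.subset_univ _), Finset.card_univ, Fintype.card_fin,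
      Finset.card_pair hij]
    omega
  · rw [Finset.sum_sdiff_eq_sub (Finset.subset_univ _), Finset.sum_pair hij, ← hS, hsum, sub_self]
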